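/- Tube overlap bound from the fundamental theorem of algebra: let $P$ be a nonzero polynomial of degree $\le D$ on $\mathbb{R}^3$ and let $O_1',\dots,O_N'$ be the connected components of $\mathbb{R}^3\setminus Z(P)$ minus the $R^{1/2+\delta}$-neighborhood $W$ of $Z(P)$. For each tube $T_{\theta,\nu}$ (a line segment thickened to radius $R^{1/2+\delta}$ with direction $G(\theta)=(-2c(\theta),1)$), the number of indices $i$ such that $T_{\theta,\nu}\cap O_i' \neq \emptyset$ is at most $D+1$. -/

import Mathlib

open MeasureTheory Real Set Filter Metric
open scoped RealInnerProductSpace ENNReal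

noncomputable section

abbrev E3 := EuclideanSpace ℝ (Fin 3)

/-- Evaluation of a polynomial in three variables at a point of `ℝ³`. -/
def evalP3 (P : MvPolynomial (Fin 3) ℝ) (w : E3) : ℝ :=
  MvPolynomial.eval (fun i => w i) P

open Polynomial in
lemma natDegree_mvaeval_le (g : Fin 3 → Polynomial ℝ) (hg : ∀ i, (g i).natDegree ≤ 1)
    (P : MvPolynomial (Fin 3) ℝ) :
    (MvPolynomial.aeval g P).natDegree ≤ P.totalDegree := by
  rw [MvPolynomial.aeval_def, MvPolynomial.eval₂_eq]
  apply Polynomial.natDegree_sum_le_of_forall_le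
  intro d hd
  have h1 : (algebraMap ℝ ℝ[X] (MvPolynomial.coeff d P) * ∏ i ∈ d.support, g i ^ d i).natDegree
      ≤ (∏ i ∈ d.support, g i ^ d i).natDegree := by
    rw [Polynomial.algebraMap_eq]; exact Polynomial.natDegree_C_mul_le _ _
  refine h1.trans (Polynomial.natDegree_prod_le _ _ |>.trans ?_)
  have h2 : ∑ i ∈ d.support, (g i ^ d i).natDegree ≤ ∑ i ∈ d.support, d i := by
    apply Finset.sum_le_sum
    intro i _
    calc (g i ^ d i).natDegree ≤ d i * (g i).natDegree := Polynomial.natDegree_pow_le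
      _ ≤ d i * 1 := Nat.mul_le_mul_left _ (hg i)
      _ = d i := Nat.mul_one _
  refine h2.trans ?_
  have := MvPolynomial.le_totalDegree hd
  rwa [Finsupp.sum] at this

lemma card_le_of_roots_between (q : Polynomial ℝ) (hq : q ≠ 0) (T : Finset ℝ)
    (hb : ∀ t ∈ T, ∀ t' ∈ T, t < t' → ∃ u, t < u ∧ u < t' ∧ q.IsRoot u) :
    T.card ≤ q.natDegree + 1 := by
  rcases T.eq_empty_or_nonempty with h | hT
  · simp [h]
  classical
  set m := T.max' hT with hm
  have hmem : m ∈ T := T.max'_mem hT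
  set nxt : ℝ → ℝ := fun t =>
    if h : (T.filter (t < ·)).Nonempty then (T.filter (t < ·)).min' h else 0 with hnxt
  have hfil : ∀ t ∈ T.erase m, (T.filter (t < ·)).Nonempty := by
    intro t ht
    exact ⟨m, Finset.mem_filter.2 ⟨hmem,
      lt_of_le_of_ne (T.le_max' t (Finset.mem_of_mem_erase ht)) (Finset.ne_of_mem_erase ht)⟩⟩
  have hnxt_mem : ∀ t ∈ T.erase m, nxt t ∈ T ∧ t < nxt t := by
    intro t ht
    have h := hfil t ht
    have := Finset.min'_mem _ h
    rw [Finset.mem_filter] at this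
    simp only [hnxt, dif_pos h]
    exact this
  have hnxt_le : ∀ t ∈ T.erase m, ∀ u ∈ T, t < u → nxt t ≤ u := by
    intro t ht u hu htu
    have h := hfil t ht
    simp only [hnxt, dif_pos h]
    exact Finset.min'_le _ _ (Finset.mem_filter.2 ⟨hu, htu⟩)
  have hex : ∀ t ∈ T.erase m, ∃ u, t < u ∧ u < nxt t ∧ q.IsRoot u := by
    intro t ht
    obtain ⟨h1, h2⟩ := hnxt_mem t ht
    exact hb t (Finset.mem_of_mem_erase ht) (nxt t) h1 h2
  set φ : ℝ → ℝ := fun t =>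
    if h : ∃ u, t < u ∧ u < nxt t ∧ q.IsRoot u then h.choose else 0 with hφ
  have hφspec : ∀ t ∈ T.erase m, t < φ t ∧ φ t < nxt t ∧ q.IsRoot (φ t) := by
    intro t ht
    have h := hex t ht
    simp only [hφ, dif_pos h]
    exact h.choose_spec
  have hcard : (T.erase m).card ≤ q.roots.toFinset.card := by
    apply Finset.card_le_card_of_injOn φ
    · intro t ht
      simp only [Finset.mem_coe, Multiset.mem_toFinset, Polynomial.mem_roots hq]
      exact (hφspec t ht).2.2
    · intro t1 h1 t2 h2 heq
      by_contra hne
      rcases lt_or_gt_of_ne hne with hlt | hlt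
      · have a1 := hφspec t1 h1
        have a2 := hφspec t2 h2
        have : nxt t1 ≤ t2 := hnxt_le t1 h1 t2 (Finset.mem_of_mem_erase h2) hlt
        linarith [a1.2.1, a2.1]
      · have a1 := hφspec t1 h1
        have a2 := hφspec t2 h2
        have : nxt t2 ≤ t1 := hnxt_le t2 h2 t1 (Finset.mem_of_mem_erase h1) hlt
        linarith [a1.1, a2.2.1]
  have : T.card = (T.erase m).card + 1 := (Finset.card_erase_add_one hmem).symm
  rw [this]
  have h3 : q.roots.toFinset.card ≤ Multiset.card q.roots := q.roots.toFinset_card_le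
  have h4 := q.card_roots'
  omega

/-- tube overlap bound from the fundamental theorem of algebra. Let `P` be
a nonzero polynomial of degree `≤ D` on `ℝ³`, `O i` the connected components of
`ℝ³ \ Z(P)`, `W` the `R^{1/2+δ}`-neighborhood of `Z(P)` and `T = T_{θ,ν}` the tube of
radius `R^{1/2+δ}` around the core line `x = c(ν) - 2t c(θ)`, `0 ≤ t ≤ R`. Then the number
of indices `i` with `T ∩ (O i \ W) ≠ ∅` is at most `D + 1`. -/
theorem tube_meets_few_cells (R δ : ℝ) (hR : 1 ≤ R) (hδ : 0 < δ)
    (D : ℕ) (P : MvPolynomial (Fin 3) ℝ) (hP : P ≠ 0) (hdeg : P.totalDegree ≤ D)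
    (cθ cν : EuclideanSpace ℝ (Fin 2))
    {ι : Type} (O : ι → Set E3) (hOinj : Function.Injective O)
    (hOcomp : ∀ i, ∃ z : E3, evalP3 P z ≠ 0 ∧
      O i = connectedComponentIn {w : E3 | evalP3 P w ≠ 0} z) :
    ∀ s : Finset ι,
      (∀ i ∈ s,
        ({w : E3 | 0 ≤ w 2 ∧ w 2 ≤ R ∧
            Real.sqrt ((w 0 - (cν 0 - 2 * w 2 * cθ 0)) ^ 2
              + (w 1 - (cν 1 - 2 * w 2 * cθ 1)) ^ 2) ≤ R ^ ((1 : ℝ) / 2 + δ)}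
          ∩ (O i \ Metric.cthickening (R ^ ((1 : ℝ) / 2 + δ))
              {w : E3 | evalP3 P w = 0})).Nonempty) →
      s.card ≤ D + 1 := by
  intro s hs
  classical
  set r : ℝ := R ^ ((1 : ℝ) / 2 + δ) with hr
  set S : Set E3 := {w : E3 | evalP3 P w ≠ 0} with hSdef
  set Z : Set E3 := {w : E3 | evalP3 P w = 0} with hZdef
  set γ : ℝ → E3 := fun t =>
    (WithLp.equiv 2 (∀ _ : Fin 3, ℝ)).symm ![cν 0 - 2 * t * cθ 0, cν 1 - 2 * t * cθ 1, t]
    with hγdef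
  have hγ0 : ∀ t, γ t 0 = cν 0 - 2 * t * cθ 0 := by intro t; simp [hγdef]
  have hγ1 : ∀ t, γ t 1 = cν 1 - 2 * t * cθ 1 := by intro t; simp [hγdef]
  have hγ2 : ∀ t, γ t 2 = t := by intro t; simp [hγdef]
  -- the one-variable polynomial
  set g : Fin 3 → Polynomial ℝ :=
    ![Polynomial.C (cν 0) - Polynomial.C (2 * cθ 0) * Polynomial.X,
      Polynomial.C (cν 1) - Polynomial.C (2 * cθ 1) * Polynomial.X,
      Polynomial.X] with hgdef
  set q : Polynomial ℝ := MvPolynomial.aeval g P with hqdef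
  have hCX : ∀ a b : ℝ, (Polynomial.C a - Polynomial.C b * Polynomial.X).natDegree ≤ 1 := by
    intro a b
    refine (Polynomial.natDegree_sub_le _ _).trans ?_
    simp only [Polynomial.natDegree_C, max_le_iff]
    exact ⟨Nat.zero_le _, (Polynomial.natDegree_C_mul_le _ _).trans (by simp)⟩
  have hgdeg : ∀ i, (g i).natDegree ≤ 1 := by
    intro i
    fin_cases i <;> simp only [hgdef, Matrix.cons_val_zero, Matrix.cons_val_one,
      Matrix.head_cons, Matrix.cons_val_two, Matrix.tail_cons]
    · exact hCX _ _
    · exact hCX _ _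
    · simp
  have hq_eval : ∀ t, q.eval t = evalP3 P (γ t) := by
    intro t
    have h1 : (Polynomial.aeval t : Polynomial ℝ →ₐ[ℝ] ℝ).comp (MvPolynomial.aeval g)
        = MvPolynomial.aeval (fun i => Polynomial.eval t (g i)) := by
      rw [MvPolynomial.comp_aeval]
      rfl
    have h2 : q.eval t = MvPolynomial.aeval (fun i => Polynomial.eval t (g i)) P := by
      have := congrArg (fun φ => φ P) h1
      simpa [Polynomial.aeval_def] using this
    rw [h2]
    have h3 : (fun i => Polynomial.eval t (g i)) = fun i => γ t i := by
      funext i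
      fin_cases i <;> simp [hgdef, hγ0, hγ1, hγ2] <;> ring
    rw [h3, evalP3]
    rw [MvPolynomial.aeval_def, Algebra.algebraMap_self]
    rfl
  have hOsubS : ∀ i, O i ⊆ S := by
    intro i
    obtain ⟨z, _, hz⟩ := hOcomp i
    rw [hz]; exact connectedComponentIn_subset _ _
  have comp_eq : ∀ i j, ∀ x : E3, x ∈ O i → x ∈ O j → i = j := by
    intro i j x hxi hxj
    obtain ⟨zi, _, hzi⟩ := hOcomp i
    obtain ⟨zj, _, hzj⟩ := hOcomp j
    apply hOinj
    have e1 : connectedComponentIn S x = O i := by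
      rw [hzi] at hxi ⊢; exact (connectedComponentIn_eq hxi).symm
    have e2 : connectedComponentIn S x = O j := by
      rw [hzj] at hxj ⊢; exact (connectedComponentIn_eq hxj).symm
    rw [← e1, ← e2]
  -- Claim A
  have claimA : ∀ i ∈ s, ∃ t : ℝ, γ t ∈ O i ∧ q.eval t ≠ 0 := by
    intro i hi
    obtain ⟨w, hw1, hw2⟩ := hs i hi
    obtain ⟨hw0R, hwR, hwtube⟩ := hw1
    set t : ℝ := w 2 with ht
    refine ⟨t, ?_⟩
    have hdist : dist w (γ t) ≤ r := by
      rw [EuclideanSpace.dist_eq, Fin.sum_univ_three, hγ0, hγ1, hγ2]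
      have : Real.sqrt (dist (w 0) (cν 0 - 2 * t * cθ 0) ^ 2
          + dist (w 1) (cν 1 - 2 * t * cθ 1) ^ 2 + dist (w 2) t ^ 2)
          = Real.sqrt ((w 0 - (cν 0 - 2 * w 2 * cθ 0)) ^ 2
              + (w 1 - (cν 1 - 2 * w 2 * cθ 1)) ^ 2) := by
        rw [Real.dist_eq, Real.dist_eq, Real.dist_eq, sq_abs, sq_abs, sq_abs, ← ht,
          sub_self]
        norm_num
      rw [this]
      exact hwtube
    have hsegdist : ∀ p ∈ segment ℝ w (γ t), dist w p ≤ r := by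
      intro p hp
      rw [segment_eq_image] at hp
      obtain ⟨u, hu, rfl⟩ := hp
      show dist w ((1 - u) • w + u • γ t) ≤ r
      have heq : (1 - u) • w + u • γ t - w = u • (γ t - w) := by module
      rw [dist_comm, dist_eq_norm, heq, norm_smul, Real.norm_eq_abs,
        abs_of_nonneg hu.1]
      calc u * ‖γ t - w‖ ≤ 1 * ‖γ t - w‖ :=
            mul_le_mul_of_nonneg_right hu.2 (norm_nonneg _)
        _ = dist (γ t) w := by rw [one_mul, dist_eq_norm]
        _ = dist w (γ t) := dist_comm _ _
        _ ≤ r := hdist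
    have hsegS : segment ℝ w (γ t) ⊆ S := by
      intro p hp
      by_contra hpS
      have hpZ : p ∈ Z := by
        simp only [hZdef, Set.mem_setOf_eq]
        simpa [hSdef, Set.mem_setOf_eq, not_not] using hpS
      exact hw2.2 (Metric.mem_cthickening_of_dist_le w p r Z hpZ (hsegdist p hp))
    obtain ⟨z, hz, hOz⟩ := hOcomp i
    have hwOi : w ∈ O i := hw2.1
    have h1 : connectedComponentIn S w = O i := by
      rw [hOz] at hwOi ⊢; exact (connectedComponentIn_eq hwOi).symm
    have hsub : segment ℝ w (γ t) ⊆ connectedComponentIn S w :=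
      (convex_segment w (γ t)).isPreconnected.subset_connectedComponentIn
        (left_mem_segment ℝ w (γ t)) hsegS
    have hγO : γ t ∈ O i := h1 ▸ hsub (right_mem_segment ℝ w (γ t))
    refine ⟨hγO, ?_⟩
    rw [hq_eval]
    exact hsegS (right_mem_segment ℝ w (γ t))
  -- Claim B
  have claimB : ∀ i j, ∀ t t' : ℝ, γ t ∈ O i → γ t' ∈ O j → t < t' → i ≠ j →
      ∃ u, t < u ∧ u < t' ∧ q.IsRoot u := by
    intro i j t t' hti htj htt hij
    by_contra hno
    push_neg at hno
    have haff : ∀ a : ℝ, (1 - a) • γ t + a • γ t' = γ ((1 - a) * t + a * t') := by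
      intro a
      refine PiLp.ext fun k => ?_
      fin_cases k <;>
        simp [PiLp.add_apply, PiLp.smul_apply, hγ0, hγ1, hγ2, smul_eq_mul] <;> ring
    have hsegS : segment ℝ (γ t) (γ t') ⊆ S := by
      intro p hp
      rw [segment_eq_image] at hp
      obtain ⟨a, ha, rfl⟩ := hp
      show (1 - a) • γ t + a • γ t' ∈ S
      rw [haff a]
      set u : ℝ := (1 - a) * t + a * t' with hu
      have hu1 : t ≤ u := by nlinarith [ha.1, ha.2]
      have hu2 : u ≤ t' := by nlinarith [ha.1, ha.2]
      simp only [hSdef, Set.mem_setOf_eq]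
      rw [← hq_eval]
      rcases eq_or_lt_of_le hu1 with h | h
      · rw [← h, hq_eval]; exact hOsubS i hti
      rcases eq_or_lt_of_le hu2 with h' | h'
      · rw [h', hq_eval]; exact hOsubS j htj
      exact fun hc => (hno u h h') hc
    obtain ⟨zi, _, hzi⟩ := hOcomp i
    have hti' := hti
    have h1 : connectedComponentIn S (γ t) = O i := by
      rw [hzi] at hti' ⊢; exact (connectedComponentIn_eq hti').symm
    have hsub : segment ℝ (γ t) (γ t') ⊆ connectedComponentIn S (γ t) :=
      (convex_segment (γ t) (γ t')).isPreconnected.subset_connectedComponentIn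
        (left_mem_segment ℝ (γ t) (γ t')) hsegS
    have : γ t' ∈ O i := h1 ▸ hsub (right_mem_segment ℝ (γ t) (γ t'))
    exact hij (comp_eq i j (γ t') this htj)
  -- assemble
  rcases s.eq_empty_or_nonempty with hse | ⟨i0, hi0⟩
  · simp [hse]
  set f : ι → ℝ := fun i =>
    if h : ∃ t : ℝ, γ t ∈ O i ∧ q.eval t ≠ 0 then h.choose else 0 with hfdef
  have hfspec : ∀ i ∈ s, γ (f i) ∈ O i ∧ q.eval (f i) ≠ 0 := by
    intro i hi
    have h := claimA i hi
    simp only [hfdef, dif_pos h]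
    exact h.choose_spec
  have hq0 : q ≠ 0 := by
    intro hq
    exact (hfspec i0 hi0).2 (by rw [hq]; simp)
  have hinjOn : Set.InjOn f s := by
    intro i hi j hj hij
    exact comp_eq i j (γ (f i)) (hfspec i hi).1 (hij ▸ (hfspec j hj).1)
  have hcard : (s.image f).card = s.card := Finset.card_image_of_injOn hinjOn
  have hb : ∀ t ∈ s.image f, ∀ t' ∈ s.image f, t < t' →
      ∃ u, t < u ∧ u < t' ∧ q.IsRoot u := by
    intro t ht t' ht'
    obtain ⟨i, hi, rfl⟩ := Finset.mem_image.1 ht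
    obtain ⟨j, hj, rfl⟩ := Finset.mem_image.1 ht'
    intro hlt
    have hij : i ≠ j := fun h => absurd (h ▸ rfl) (ne_of_lt (h ▸ hlt))
    exact claimB i j (f i) (f j) (hfspec i hi).1 (hfspec j hj).1 hlt hij
  have hmain := card_le_of_roots_between q hq0 (s.image f) hb
  have hdq : q.natDegree ≤ D := (natDegree_mvaeval_le g hgdeg P).trans hdeg
  omega
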